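/- Let n ∈ ℕ and define x_j = cos²((n+1-j)π/(2n+2)) for j = 1, ..., n. Then for every k with 1 ≤ k ≤ n, the alternating sum xₙᵏ - x_{n-1}ᵏ + x_{n-2}ᵏ - ... + (-1)^{n-1} x₁ᵏ equals 1/2. -/

import Mathlib

open Real

open Finset

lemma inner_geom (N : ℕ) (r k : ℕ) (hkN : k < N) (hr : r ≤ 2*k) :
    ∑ m ∈ range (2*N), (-(Complex.exp (Complex.I*π*((r:ℝ)-k)/N)))^m = 0 := by
  set w : ℂ := -(Complex.exp (Complex.I*π*((r:ℝ)-k)/N)) with hw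
  have hN0 : (N:ℂ) ≠ 0 := Nat.cast_ne_zero.mpr (by omega)
  have hw2N : w ^ (2*N) = 1 := by
    rw [hw, neg_pow, ← Complex.exp_nat_mul]
    have : (2*N : ℕ) * (Complex.I*π*((r:ℝ)-k)/N) = (((r:ℤ)-k : ℤ) : ℂ) * (2*π*Complex.I) := by
      push_cast; field_simp
    rw [this, Complex.exp_int_mul_two_pi_mul_I ((r:ℤ)-k),
      Even.neg_one_pow ⟨N, by ring⟩, one_mul]
  have hwne : w ≠ 1 := by
    intro h
    have h2 : Complex.exp (Complex.I*π*((r:ℝ)-k)/N + π * Complex.I) = 1 := by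
      rw [Complex.exp_add, Complex.exp_pi_mul_I]
      rw [hw] at h
      linear_combination h
    rw [Complex.exp_eq_one_iff] at h2
    obtain ⟨m, hm⟩ := h2
    have hπI : (π:ℂ) * Complex.I ≠ 0 := by
      simp [Real.pi_ne_zero, Complex.I_ne_zero]
    have hC : ((r:ℂ) - k + N) = (m:ℂ) * (2*N) := by
      have h7 : ((r:ℂ) - k + N) * ((π:ℂ) * Complex.I) = ((m:ℂ) * (2*N)) * ((π:ℂ) * Complex.I) := by
        field_simp at hm
        push_cast at hm
        linear_combination (↑π * Complex.I) * hm
      exact mul_right_cancel₀ hπI h7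
    have h5 : (r:ℤ) - k + N = m * (2*N) := by exact_mod_cast hC
    rcases lt_or_ge m 1 with h6 | h6
    · nlinarith [mul_le_mul_of_nonneg_right (by omega : m ≤ 0) (show (0:ℤ) ≤ 2*N by positivity)]
    · nlinarith [mul_le_mul_of_nonneg_right h6 (show (0:ℤ) ≤ 2*N by positivity)]
  have := geom_sum_eq hwne (2*N)
  rw [hw2N] at this
  simp [this]

lemma keyC (N k : ℕ) (hkN : k < N) :
    ∑ m ∈ range (2*N), (-1:ℂ)^m * (Complex.cos ((m:ℝ)*π/(2*N)))^(2*k) = 0 := by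
  have hN0 : (N:ℂ) ≠ 0 := Nat.cast_ne_zero.mpr (by omega)
  have hterm : ∀ m ∈ range (2*N), (-1:ℂ)^m * (Complex.cos ((m:ℝ)*π/(2*N)))^(2*k)
      = ∑ r ∈ range (2*k+1),
          ((Nat.choose (2*k) r : ℂ)/4^k) * (-(Complex.exp (Complex.I*π*((r:ℝ)-k)/N)))^m := by
    intro m _
    set t : ℂ := Complex.I * ((m:ℝ)*π/(2*N)) with ht
    set a : ℂ := Complex.exp t with ha
    have ha0 : a ≠ 0 := Complex.exp_ne_zero t
    have hcos : Complex.cos ((m:ℝ)*π/(2*N)) = (a + a⁻¹)/2 := by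
      rw [Complex.cos, ha, ht, ← Complex.exp_neg]
      ring_nf
    have hexp : ∀ r : ℕ, r ≤ 2*k →
        (-(Complex.exp (Complex.I*π*((r:ℝ)-k)/N)))^m = (-1)^m * ((a^2)^r * (a⁻¹)^(2*k)) := by
      intro r _
      have h1 : (a^2)^r * (a⁻¹)^(2*k)
          = Complex.exp ((2*r:ℕ)*t) * Complex.exp ((2*k:ℕ)*(-t)) := by
        rw [Complex.exp_nat_mul, Complex.exp_nat_mul, Complex.exp_neg, ha, ← pow_mul]
      have h2 : Complex.exp (Complex.I*π*((r:ℝ)-k)/N) ^ m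
          = Complex.exp ((2*r:ℕ)*t) * Complex.exp ((2*k:ℕ)*(-t)) := by
        rw [← Complex.exp_add, ← Complex.exp_nat_mul]
        congr 1
        rw [ht]
        push_cast
        field_simp
        ring
      rw [neg_pow, h2, h1]
    calc (-1:ℂ)^m * (Complex.cos ((m:ℝ)*π/(2*N)))^(2*k)
        = (-1)^m * (((a^2+1) * a⁻¹)^(2*k) / 4^k) := by
          rw [hcos]
          have h1 : (a^2+1) * a⁻¹ = a + a⁻¹ := by field_simp
          rw [h1, div_pow]
          congr 1
          rw [show ((4:ℂ)^k) = (2^2)^k by norm_num, ← pow_mul]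
      _ = (-1)^m * ((∑ r ∈ range (2*k+1), (a^2)^r * 1^(2*k-r) * (Nat.choose (2*k) r : ℂ))
            * (a⁻¹)^(2*k) / 4^k) := by rw [mul_pow, add_pow]
      _ = ∑ r ∈ range (2*k+1),
          ((Nat.choose (2*k) r : ℂ)/4^k) * (-(Complex.exp (Complex.I*π*((r:ℝ)-k)/N)))^m := by
          rw [sum_mul, sum_div, mul_sum]
          refine sum_congr rfl fun r hr => ?_
          rw [hexp r (by simp at hr; omega)]
          ring
  rw [sum_congr rfl hterm, sum_comm]
  refine sum_eq_zero fun r hr => ?_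
  rw [← mul_sum, inner_geom N r k hkN (by simp at hr; omega), mul_zero]

lemma keyR (N k : ℕ) (hkN : k < N) :
    ∑ m ∈ range (2*N), (-1:ℝ)^m * Real.cos ((m:ℝ)*π/(2*N))^(2*k) = 0 := by
  have := keyC N k hkN
  have h2 : ((∑ m ∈ range (2*N), (-1:ℝ)^m * Real.cos ((m:ℝ)*π/(2*N))^(2*k) : ℝ) : ℂ) = 0 := by
    push_cast [Complex.ofReal_cos]
    convert this using 2
    norm_cast
  exact_mod_cast h2

lemma keyT (N k : ℕ) (hk1 : 1 ≤ k) (hkN : k < N) :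
    ∑ m ∈ Ico 1 N, (-1:ℝ)^m * Real.cos ((m:ℝ)*π/(2*N))^(2*k) = -(1/2) := by
  set g : ℕ → ℝ := fun m => (-1:ℝ)^m * Real.cos ((m:ℝ)*π/(2*N))^(2*k) with hg
  have hN2 : 2 ≤ N := by omega
  have hsplit : ∑ m ∈ range (2*N), g m
      = (∑ m ∈ Ico 0 1, g m) + (∑ m ∈ Ico 1 N, g m)
        + (∑ m ∈ Ico N (N+1), g m) + (∑ m ∈ Ico (N+1) (2*N), g m) := by
    rw [Finset.range_eq_Ico,
      ← Finset.sum_Ico_consecutive g (by omega : 0 ≤ N+1) (by omega : N+1 ≤ 2*N),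
      ← Finset.sum_Ico_consecutive g (by omega : (0:ℕ) ≤ N) (by omega : N ≤ N+1),
      ← Finset.sum_Ico_consecutive g (by omega : (0:ℕ) ≤ 1) (by omega : 1 ≤ N)]
  have h0 : ∑ m ∈ Ico 0 1, g m = 1 := by
    simp [hg]
  have hN : ∑ m ∈ Ico N (N+1), g m = 0 := by
    have : Real.cos ((N:ℝ)*π/(2*N)) = 0 := by
      have hN0 : (N:ℝ) ≠ 0 := Nat.cast_ne_zero.mpr (by omega)
      rw [show (N:ℝ)*π/(2*N) = π/2 by field_simp, Real.cos_pi_div_two]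
    simp [hg, this, zero_pow (by omega : 2*k ≠ 0)]
  have hrefl : ∑ m ∈ Ico (N+1) (2*N), g m = ∑ m ∈ Ico 1 N, g m := by
    refine Finset.sum_nbij' (fun m => 2*N - m) (fun m => 2*N - m) ?_ ?_ ?_ ?_ ?_
    · intro m hm; simp at hm ⊢; omega
    · intro m hm; simp at hm ⊢; omega
    · intro m hm; simp only [mem_Ico] at hm; show 2*N - (2*N - m) = m; omega
    · intro m hm; simp only [mem_Ico] at hm; show 2*N - (2*N - m) = m; omega
    · intro m hm
      simp only [mem_Ico] at hm
      have hcast : ((2*N - m : ℕ) : ℝ) = 2*N - m := by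
        push_cast [Nat.cast_sub (by omega : m ≤ 2*N)]; ring
      have hsign : (-1:ℝ)^(2*N-m) = (-1)^m := by
        rcases Nat.even_or_odd m with he | ho
        · rw [Even.neg_one_pow he, Even.neg_one_pow (by obtain ⟨c,hc⟩ := he; exact ⟨N-c, by omega⟩)]
        · rw [Odd.neg_one_pow ho, Odd.neg_one_pow (by obtain ⟨c,hc⟩ := ho; exact ⟨N-c-1, by omega⟩)]
      have hN0 : (N:ℝ) ≠ 0 := Nat.cast_ne_zero.mpr (by omega)
      have hcosarg : ((2*N - m : ℕ):ℝ)*π/(2*N) = π - (m:ℝ)*π/(2*N) := by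
        rw [hcast]; field_simp
      rw [hg]
      simp only
      rw [hcosarg, Real.cos_pi_sub, hsign,
        Even.neg_pow (⟨k, by ring⟩ : Even (2*k)) (Real.cos ((m:ℝ)*π/(2*N)))]
  have hkey := keyR N k hkN
  rw [hsplit] at hkey
  rw [h0, hN, hrefl] at hkey
  linarith

theorem stmt_8 (n : ℕ) (k : ℕ) (hk1 : 1 ≤ k) (hkn : k ≤ n) :
    ∑ j ∈ Finset.Icc 1 n,
      (-1 : ℝ) ^ (n - j) * (Real.cos (((n:ℝ) + 1 - j) * π / (2*n + 2)) ^ 2) ^ k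
      = 1 / 2 := by
  have hT := keyT (n+1) k hk1 (by omega)
  have hstep : ∑ j ∈ Finset.Icc 1 n,
      (-1 : ℝ) ^ (n - j) * (Real.cos (((n:ℝ) + 1 - j) * π / (2*n + 2)) ^ 2) ^ k
      = ∑ m ∈ Ico 1 (n+1), -((-1:ℝ)^m * Real.cos ((m:ℝ)*π/(2*((n+1:ℕ):ℝ)))^(2*k)) := by
    rw [← Finset.Ico_add_one_right_eq_Icc]
    refine Finset.sum_nbij' (fun j => n+1-j) (fun m => n+1-m) ?_ ?_ ?_ ?_ ?_
    · intro j hj; simp only [mem_Ico] at hj ⊢; omega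
    · intro m hm; simp only [mem_Ico] at hm ⊢; omega
    · intro j hj; simp only [mem_Ico] at hj; show n+1-(n+1-j) = j; omega
    · intro m hm; simp only [mem_Ico] at hm; show n+1-(n+1-m) = m; omega
    · intro j hj
      simp only [mem_Ico] at hj
      have h1 : ((n+1-j:ℕ):ℝ) = (n:ℝ)+1-j := by
        push_cast [Nat.cast_sub (by omega : j ≤ n+1)]; ring
      show _ = -((-1:ℝ)^(n+1-j) * Real.cos (((n+1-j:ℕ):ℝ)*π/(2*((n+1:ℕ):ℝ)))^(2*k))
      rw [h1, show ((n+1:ℕ):ℝ) = (n:ℝ)+1 by push_cast; ring,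
        show 2*((n:ℝ)+1) = 2*n+2 by ring,
        show n+1-j = (n-j)+1 by omega, ← pow_mul]
      ring
  rw [hstep, Finset.sum_neg_distrib, hT]
  norm_num
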